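/- Let A be an r×c tropical matrix with full rank and connected bipartite graph B_A. Then there exists a vector u ∈ ℝ^r that is a right eigenvector simultaneously for every matrix P ∈ G_A, and a vector v ∈ ℝ^c that is a left eigenvector simultaneously for every matrix Q in the dual group {}_AG. -/

import Mathlib

open scoped Classical

/-- The tropical (max-plus) semiring carrier: `ℝ ∪ {-∞}`, where `⊔` is tropical
addition (max) and `+` is tropical multiplication (with `⊥ = -∞` absorbing). -/
abbrev Trop : Type := WithBot ℝ

/-- Tropical matrix multiplication: `(A ⊗ B) i j = max_k (A i k + B k j)`. -/
def tmul {n m p : ℕ} (A : Fin n → Fin m → Trop) (B : Fin m → Fin p → Trop) :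
    Fin n → Fin p → Trop :=
  fun i j => Finset.univ.sup fun k => A i k + B k j

/-- Tropical matrix-vector multiplication (column vector on the right). -/
def tvmul {n m : ℕ} (A : Fin n → Fin m → Trop) (v : Fin m → Trop) : Fin n → Trop :=
  fun i => Finset.univ.sup fun k => A i k + v k

/-- Tropical vector-matrix multiplication (row vector on the left). -/
def vtmul {n m : ℕ} (v : Fin n → Trop) (A : Fin n → Fin m → Trop) : Fin m → Trop :=
  fun j => Finset.univ.sup fun k => v k + A k j

/-- The tropical identity matrix: `0` on the diagonal, `-∞` elsewhere. -/
def tId (n : ℕ) : Fin n → Fin n → Trop :=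
  fun i j => if i = j then ((0 : ℝ) : Trop) else ⊥

/-- A monomial matrix: exactly one entry different from `-∞` in each row and each column. -/
def IsMonomial {n : ℕ} (P : Fin n → Fin n → Trop) : Prop :=
  (∀ i, ∃! j, P i j ≠ ⊥) ∧ (∀ j, ∃! i, P i j ≠ ⊥)

/-- A `T`-subsemimodule of `T^n`: closed under tropical addition (max) and scaling. -/
def IsTropSubmodule {n : ℕ} (S : Set (Fin n → Trop)) : Prop :=
  (∀ x ∈ S, ∀ y ∈ S, x ⊔ y ∈ S) ∧
  (∀ c : Trop, ∀ x ∈ S, (fun i => c + x i) ∈ S)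

/-- The `T`-subsemimodule generated by a set of vectors. -/
def genBy {n : ℕ} (G : Set (Fin n → Trop)) : Set (Fin n → Trop) :=
  ⋂₀ {S | IsTropSubmodule S ∧ G ⊆ S}

/-- The column space of a tropical matrix. -/
def colSpace {n m : ℕ} (A : Fin n → Fin m → Trop) : Set (Fin n → Trop) :=
  genBy {v | ∃ j, v = fun i => A i j}

/-- The row space of a tropical matrix. -/
def rowSpace {n m : ℕ} (A : Fin n → Fin m → Trop) : Set (Fin m → Trop) :=
  genBy {v | ∃ i, v = fun j => A i j}

/-- The column rank: minimum cardinality of a generating set of the column space. -/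
noncomputable def colRank {n m : ℕ} (A : Fin n → Fin m → Trop) : ℕ :=
  sInf {k | ∃ G : Finset (Fin n → Trop), G.card = k ∧ genBy (↑G) = colSpace A}

/-- The row rank: minimum cardinality of a generating set of the row space. -/
noncomputable def rowRank {n m : ℕ} (A : Fin n → Fin m → Trop) : ℕ :=
  sInf {k | ∃ G : Finset (Fin m → Trop), G.card = k ∧ genBy (↑G) = rowSpace A}

/-- Isomorphism of tropical subsemimodules (given by a bijection preserving
tropical addition and scaling). -/
def TropIso {n m : ℕ} (S : Set (Fin n → Trop)) (S' : Set (Fin m → Trop)) : Prop :=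
  ∃ f : (Fin n → Trop) → (Fin m → Trop),
    Set.BijOn f S S' ∧
    (∀ x ∈ S, ∀ y ∈ S, f (x ⊔ y) = f x ⊔ f y) ∧
    (∀ c : Trop, ∀ x ∈ S, f (fun i => c + x i) = fun i => c + f x i)

/-- The `H`-class of a matrix `A` in `M(T)` (among matrices of the same shape),
characterised by equality of column and row spaces. -/
def HSet {n m : ℕ} (A : Fin n → Fin m → Trop) : Set (Fin n → Fin m → Trop) :=
  {B | colSpace B = colSpace A ∧ rowSpace B = rowSpace A}

/-- Adjacency of the coloured bipartite graph `B_A` of a tropical matrix. -/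
def BAdj {r c : ℕ} (A : Fin r → Fin c → Trop) :
    (Fin r ⊕ Fin c) → (Fin r ⊕ Fin c) → Prop
  | Sum.inl i, Sum.inr j => A i j ≠ ⊥
  | Sum.inr j, Sum.inl i => A i j ≠ ⊥
  | _, _ => False

/-- Connectedness of the bipartite graph `B_A`. -/
def BConnected {r c : ℕ} (A : Fin r → Fin c → Trop) : Prop :=
  ∀ x y : Fin r ⊕ Fin c, Relation.ReflTransGen (BAdj A) x y

/-- `lam` is a tropical eigenvalue of `P`. -/
def IsEig {n : ℕ} (P : Fin n → Fin n → Trop) (lam : Trop) : Prop :=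
  ∃ v : Fin n → Trop, v ≠ (fun _ => ⊥) ∧ tvmul P v = fun i => lam + v i

/-- The group `G_A` of monomial matrices `P` with `C(PA) = C(A)`. -/
def GA {r c : ℕ} (A : Fin r → Fin c → Trop) : Set (Fin r → Fin r → Trop) :=
  {P | IsMonomial P ∧ colSpace (tmul P A) = colSpace A}

/-- The dual group `{}_AG` of monomial matrices `Q` with `R(AQ) = R(A)`. -/
def AGr {r c : ℕ} (A : Fin r → Fin c → Trop) : Set (Fin c → Fin c → Trop) :=
  {Q | IsMonomial Q ∧ rowSpace (tmul A Q) = rowSpace A}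

lemma trop_add_finsup (a : Trop) {ι : Type*} (s : Finset ι) (f : ι → Trop) :
    a + s.sup f = s.sup fun j => a + f j := by
  have h := Finset.comp_sup_eq_sup_comp (s := s) (f := f) (fun x => a + x)
    (fun x y => (max_add_add_left a x y).symm) (by simp)
  simpa [Function.comp_def] using h

lemma trop_finsup_add {ι : Type*} (s : Finset ι) (f : ι → Trop) (a : Trop) :
    s.sup f + a = s.sup fun j => f j + a := by
  have h := Finset.comp_sup_eq_sup_comp (s := s) (f := f) (fun x => x + a)
    (fun x y => (max_add_add_right x y a).symm) (by simp)
  simpa [Function.comp_def] using h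

lemma trop_sup_single {ι : Type*} [Fintype ι] (f : ι → Trop) (k : ι)
    (h : ∀ j, j ≠ k → f j = ⊥) : Finset.univ.sup f = f k := by
  refine le_antisymm (Finset.sup_le fun j _ => ?_) (Finset.le_sup (Finset.mem_univ k))
  by_cases hj : j = k
  · exact hj ▸ le_rfl
  · simp [h j hj]

lemma subset_genBy {n : ℕ} (G : Set (Fin n → Trop)) : G ⊆ genBy G :=
  fun _ hx => Set.mem_sInter.mpr fun _ hS => hS.2 hx

lemma genBy_subset {n : ℕ} {G S : Set (Fin n → Trop)} (hS : IsTropSubmodule S)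
    (h : G ⊆ S) : genBy G ⊆ S :=
  fun _ hx => (Set.mem_sInter.mp hx) S ⟨hS, h⟩

lemma isSubmodule_genBy {n : ℕ} (G : Set (Fin n → Trop)) : IsTropSubmodule (genBy G) := by
  constructor
  · intro x hx y hy
    exact Set.mem_sInter.mpr fun S hS =>
      hS.1.1 x (Set.mem_sInter.mp hx S hS) y (Set.mem_sInter.mp hy S hS)
  · intro c x hx
    exact Set.mem_sInter.mpr fun S hS => hS.1.2 c x (Set.mem_sInter.mp hx S hS)

lemma genBy_mono {n : ℕ} {G G' : Set (Fin n → Trop)} (h : G ⊆ G') : genBy G ⊆ genBy G' :=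
  genBy_subset (isSubmodule_genBy G') (h.trans (subset_genBy G'))

lemma finsetSup_mem {n : ℕ} {S : Set (Fin n → Trop)} (hS : IsTropSubmodule S)
    {ι : Type*} (s : Finset ι) (hs : s.Nonempty) (C : ι → Trop) (ws : ι → Fin n → Trop)
    (h : ∀ l ∈ s, ws l ∈ S) : (fun i => s.sup fun l => C l + ws l i) ∈ S := by
  induction s using Finset.cons_induction with
  | empty => exact absurd hs (by simp)
  | cons a s ha ih =>
    rcases s.eq_empty_or_nonempty with rfl | hne
    · have : (fun i => (Finset.cons a ∅ ha).sup fun l => C l + ws l i)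
          = fun i => C a + ws a i := by
        funext i; simp [Finset.sup_cons]
      rw [this]
      exact hS.2 (C a) _ (h a (Finset.mem_cons_self a _))
    · have hmem := ih hne (fun l hl => h l (Finset.mem_cons_of_mem hl))
      have : (fun i => (Finset.cons a s ha).sup fun l => C l + ws l i)
          = (fun i => C a + ws a i) ⊔ (fun i => s.sup fun l => C l + ws l i) := by
        funext i; simp [Finset.sup_cons]
      rw [this]
      exact hS.1 _ (hS.2 (C a) _ (h a (Finset.mem_cons_self a _))) _ hmem

lemma genBy_range_eq {n : ℕ} {ι : Type*} [Fintype ι] [Nonempty ι] (w : ι → Fin n → Trop) :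
    genBy (Set.range w)
      = {x | ∃ d : ι → Trop, x = fun i => Finset.univ.sup fun j => d j + w j i} := by
  apply Set.Subset.antisymm
  · refine genBy_subset ⟨?_, ?_⟩ ?_
    · rintro x ⟨d, rfl⟩ y ⟨d', rfl⟩
      refine ⟨fun j => d j ⊔ d' j, funext fun i => ?_⟩
      have h1 : ((fun i => Finset.univ.sup fun j => d j + w j i) ⊔
          (fun i => Finset.univ.sup fun j => d' j + w j i)) i
          = (Finset.univ.sup fun j => d j + w j i) ⊔ (Finset.univ.sup fun j => d' j + w j i) := rfl
      rw [h1, (Finset.sup_sup).symm.trans rfl]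
      · exact Finset.sup_congr rfl fun j _ => by
          show (d j + w j i) ⊔ (d' j + w j i) = (d j ⊔ d' j) + w j i
          exact max_add_add_right (d j) (d' j) (w j i)
    · rintro c x ⟨d, rfl⟩
      refine ⟨fun j => c + d j, funext fun i => ?_⟩
      show c + (Finset.univ.sup fun j => d j + w j i) = _
      rw [trop_add_finsup]
      exact Finset.sup_congr rfl fun j _ => (add_assoc c (d j) (w j i)).symm
    · rintro x ⟨k, rfl⟩
      refine ⟨fun j => if j = k then ((0:ℝ) : Trop) else ⊥, funext fun i => ?_⟩
      rw [trop_sup_single _ k (fun j hj => by simp [hj])]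
      simp
  · rintro x ⟨d, rfl⟩
    exact finsetSup_mem (isSubmodule_genBy _) Finset.univ Finset.univ_nonempty d w
      (fun l _ => subset_genBy _ ⟨l, rfl⟩)

lemma trop_ne_bot {x : Trop} (h : x ≠ ⊥) : ∃ t : ℝ, x = (t : Trop) := by
  induction x using WithBot.recBotCoe with
  | bot => exact absurd rfl h
  | coe t => exact ⟨t, rfl⟩

lemma trop_cancel (t : ℝ) (x y : Trop) (h : y = (t : Trop) + x) :
    x = ((-t : ℝ) : Trop) + y := by
  subst h; rw [← add_assoc, ← WithBot.coe_add, neg_add_cancel, WithBot.coe_zero, zero_add]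

lemma trop_add_lt_of_neg {C : Trop} (h : C < ((0:ℝ):Trop)) (x : ℝ) :
    C + ((x:ℝ):Trop) < ((x:ℝ):Trop) := by
  induction C using WithBot.recBotCoe with
  | bot => simpa using WithBot.bot_lt_coe x
  | coe cv =>
    rw [← WithBot.coe_add, WithBot.coe_lt_coe]
    rw [WithBot.coe_lt_coe] at h
    linarith

lemma trop_add_eq_zero {d e : Trop} (h : d + e = ((0:ℝ):Trop)) :
    ∃ dv ev : ℝ, d = (dv : Trop) ∧ e = (ev : Trop) ∧ dv + ev = 0 := by
  induction d using WithBot.recBotCoe with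
  | bot => simp at h
  | coe dv =>
    induction e using WithBot.recBotCoe with
    | bot => simp at h
    | coe ev => exact ⟨dv, ev, rfl, rfl, by exact_mod_cast h⟩

lemma not_redundant {n m : ℕ} (w : Fin m → Fin n → Trop)
    (hrank : sInf {k | ∃ G : Finset (Fin n → Trop),
      G.card = k ∧ genBy ↑G = genBy (Set.range w)} = m)
    (k : Fin m) (hk : w k ∈ genBy (w '' {l | l ≠ k})) : False := by
  set G : Finset (Fin n → Trop) := (Finset.univ.erase k).image w with hG
  have hcoe : (↑G : Set (Fin n → Trop)) = w '' {l | l ≠ k} := by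
    rw [hG, Finset.coe_image, Finset.coe_erase, Finset.coe_univ]
    congr 1; ext l; simp
  have hgen : genBy (↑G : Set (Fin n → Trop)) = genBy (Set.range w) := by
    apply Set.Subset.antisymm
    · refine genBy_mono ?_
      rw [hcoe]; rintro v ⟨l, _, rfl⟩; exact ⟨l, rfl⟩
    · refine genBy_subset (isSubmodule_genBy _) ?_
      rintro v ⟨l, rfl⟩
      by_cases hl : l = k
      · subst hl; rw [hcoe]; exact hk
      · exact subset_genBy _ (by rw [hcoe]; exact ⟨l, hl, rfl⟩)
  have h1 : m ≤ G.card := hrank ▸ Nat.sInf_le ⟨G, rfl, hgen⟩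
  have h2 : G.card ≤ m - 1 := le_trans Finset.card_image_le
    (by simp [Finset.card_erase_of_mem])
  have h3 : 0 < m := k.pos
  omega

lemma key_unique {n m : ℕ} (hm : 0 < m) (w z : Fin m → Fin n → Trop)
    (hfin : ∀ k, ∃ i, w k i ≠ ⊥)
    (hspan : genBy (Set.range z) = genBy (Set.range w))
    (hrank : sInf {k | ∃ G : Finset (Fin n → Trop),
      G.card = k ∧ genBy ↑G = genBy (Set.range w)} = m) :
    ∃ (τ : Equiv.Perm (Fin m)) (q : Fin m → ℝ),
      ∀ j i, z j i = ((q j : ℝ) : Trop) + w (τ j) i := by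
  haveI : Nonempty (Fin m) := ⟨⟨0, hm⟩⟩
  have hw : ∀ k, ∃ d : Fin m → Trop,
      w k = fun i => Finset.univ.sup fun j => d j + z j i := by
    intro k
    have hmem : w k ∈ genBy (Set.range z) := by
      rw [hspan]; exact subset_genBy _ ⟨k, rfl⟩
    rwa [genBy_range_eq] at hmem
  have hz : ∀ j, ∃ e : Fin m → Trop,
      z j = fun i => Finset.univ.sup fun l => e l + w l i := by
    intro j
    have hmem : z j ∈ genBy (Set.range w) := by
      rw [← hspan]; exact subset_genBy _ ⟨j, rfl⟩
    rwa [genBy_range_eq] at hmem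
  choose d hd using hw
  choose e he using hz
  have main : ∀ k, ∃ j, ∃ ev : ℝ, ∀ i, z j i = ((ev:ℝ):Trop) + w k i := by
    intro k
    set C : Fin m → Trop := fun l => Finset.univ.sup fun j => d k j + e j l with hC
    have hcomb : ∀ i, w k i = Finset.univ.sup fun l => C l + w l i := by
      intro i
      have h0 : w k i = Finset.univ.sup fun j => d k j + z j i := congrFun (hd k) i
      rw [h0]
      calc Finset.univ.sup (fun j => d k j + z j i)
          = Finset.univ.sup (fun j => Finset.univ.sup fun l => d k j + (e j l + w l i)) := by
            refine Finset.sup_congr rfl fun j _ => ?_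
            rw [congrFun (he j) i, trop_add_finsup]
        _ = Finset.univ.sup (fun l => Finset.univ.sup fun j => d k j + (e j l + w l i)) :=
            Finset.sup_comm _ _ _
        _ = Finset.univ.sup (fun l => C l + w l i) := by
            refine Finset.sup_congr rfl fun l _ => ?_
            rw [hC, trop_finsup_add]
            exact Finset.sup_congr rfl fun j _ => (add_assoc _ _ _).symm
    have hsplit : ∀ i, w k i
        = (C k + w k i) ⊔ ((Finset.univ.erase k).sup fun l => C l + w l i) := by
      intro i
      have huniv : (Finset.univ : Finset (Fin m)) = insert k (Finset.univ.erase k) :=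
        (Finset.insert_erase (Finset.mem_univ k)).symm
      conv_lhs => rw [hcomb i, huniv, Finset.sup_insert]
    rcases lt_trichotomy (C k) ((0:ℝ):Trop) with hlt | heq | hgt
    · exfalso
      have hS : ∀ i, ((Finset.univ.erase k).sup fun l => C l + w l i) = w k i := by
        intro i
        by_cases hwib : w k i = ⊥
        · have hle : ((Finset.univ.erase k).sup fun l => C l + w l i) ≤ w k i := by
            conv_rhs => rw [hsplit i]
            exact le_sup_right
          rw [hwib] at hle ⊢
          exact le_bot_iff.mp hle
        · obtain ⟨x, hx⟩ := trop_ne_bot hwib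
          have hXlt : C k + w k i < w k i := by rw [hx]; exact trop_add_lt_of_neg hlt x
          rcases max_choice (C k + w k i)
            ((Finset.univ.erase k).sup fun l => C l + w l i) with hc | hc
          · exact absurd ((hsplit i).trans hc).symm (ne_of_lt hXlt)
          · exact ((hsplit i).trans hc).symm
      rcases (Finset.univ.erase k).eq_empty_or_nonempty with hemp | hne
      · obtain ⟨i, hi⟩ := hfin k
        rw [← hS i, hemp] at hi
        simp at hi
      · apply not_redundant w hrank k
        have hwk : w k = fun i => (Finset.univ.erase k).sup fun l => C l + w l i :=
          funext fun i => (hS i).symm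
        rw [hwk]
        exact finsetSup_mem (isSubmodule_genBy _) _ hne C w
          (fun l hl => subset_genBy _ ⟨l, (Finset.mem_erase.mp hl).1, rfl⟩)
    · obtain ⟨j, _, hj⟩ := Finset.exists_mem_eq_sup Finset.univ Finset.univ_nonempty
        (fun j => d k j + e j k)
      have hsum : d k j + e j k = ((0:ℝ):Trop) := by
        rw [← hj]
        exact heq
      obtain ⟨dv, ev, hdv, hev, hde⟩ := trop_add_eq_zero hsum
      refine ⟨j, ev, fun i => ?_⟩
      have h1 : ((dv:ℝ):Trop) + z j i ≤ w k i := by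
        rw [congrFun (hd k) i, ← hdv]
        exact Finset.le_sup (f := fun j' => d k j' + z j' i) (Finset.mem_univ j)
      have h2 : ((ev:ℝ):Trop) + w k i ≤ z j i := by
        rw [congrFun (he j) i, ← hev]
        exact Finset.le_sup (f := fun l => e j l + w l i) (Finset.mem_univ k)
      have h3 : w k i ≤ ((dv:ℝ):Trop) + z j i := by
        calc w k i = ((dv:ℝ):Trop) + (((ev:ℝ):Trop) + w k i) := by
              rw [← add_assoc, ← WithBot.coe_add, hde, WithBot.coe_zero, zero_add]
          _ ≤ ((dv:ℝ):Trop) + z j i := add_le_add le_rfl h2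
      have h4 : w k i = ((dv:ℝ):Trop) + z j i := le_antisymm h3 h1
      have h5 := trop_cancel dv (z j i) (w k i) h4
      have hev' : ev = -dv := by linarith
      rw [hev']
      exact h5
    · exfalso
      obtain ⟨i, hi⟩ := hfin k
      obtain ⟨x, hx⟩ := trop_ne_bot hi
      have h1 : C k + w k i ≤ w k i := by
        conv_rhs => rw [hsplit i]
        exact le_sup_left
      have hCk : C k ≠ ⊥ := ne_bot_of_gt hgt
      obtain ⟨cv, hcv⟩ := trop_ne_bot hCk
      rw [hcv, hx, ← WithBot.coe_add, WithBot.coe_le_coe] at h1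
      rw [hcv, WithBot.coe_lt_coe] at hgt
      linarith
  choose jj evv h2 using main
  have hinj : Function.Injective jj := by
    intro k k' hkk
    by_contra hne
    apply not_redundant w hrank k
    have hstep : ∀ i, w k i = ((evv k' - evv k : ℝ):Trop) + w k' i := by
      intro i
      have e1 : w k i = ((-(evv k) : ℝ):Trop) + z (jj k) i :=
        trop_cancel (evv k) (w k i) (z (jj k) i) (h2 k i)
      rw [e1, hkk, h2 k' i, ← add_assoc, ← WithBot.coe_add,
        show -(evv k) + evv k' = evv k' - evv k from by ring]
    have hwk : w k = fun i => ((evv k' - evv k : ℝ):Trop) + w k' i := funext hstep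
    rw [hwk]
    exact (isSubmodule_genBy _).2 _ _
      (subset_genBy _ ⟨k', fun h => hne h.symm, rfl⟩)
  have hbij : Function.Bijective jj := Finite.injective_iff_bijective.mp hinj
  let τ0 : Equiv.Perm (Fin m) := Equiv.ofBijective jj hbij
  refine ⟨τ0.symm, fun j => evv (τ0.symm j), fun j i => ?_⟩
  have hj : jj (τ0.symm j) = j := τ0.apply_symm_apply j
  have hres := h2 (τ0.symm j) i
  rw [hj] at hres
  exact hres

lemma monomial_struct {n : ℕ} (P : Fin n → Fin n → Trop) (h : IsMonomial P) :
    ∃ (σ : Equiv.Perm (Fin n)) (p : Fin n → ℝ),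
      ∀ i k, P i k = if k = σ i then ((p i : ℝ) : Trop) else ⊥ := by
  choose σ0 h1 h2 using h.1
  have hinj : Function.Injective σ0 := by
    intro i i' hii
    obtain ⟨i0, _, hu⟩ := h.2 (σ0 i)
    have e1 := hu i (h1 i)
    have e2 := hu i' (by rw [hii]; exact h1 i')
    rw [e1, e2]
  choose p hp using fun i => trop_ne_bot (h1 i)
  refine ⟨Equiv.ofBijective σ0 (Finite.injective_iff_bijective.mp hinj), p, fun i k => ?_⟩
  have hco : (Equiv.ofBijective σ0 (Finite.injective_iff_bijective.mp hinj)) i = σ0 i := rfl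
  rw [hco]
  by_cases hk : k = σ0 i
  · rw [if_pos hk, hk, hp i]
  · rw [if_neg hk]
    by_contra hbot
    exact hk (h2 i k hbot)

lemma tmul_entry {r c : ℕ} (P : Fin r → Fin r → Trop) (A : Fin r → Fin c → Trop)
    (σ : Equiv.Perm (Fin r)) (p : Fin r → ℝ)
    (hP : ∀ i k, P i k = if k = σ i then ((p i : ℝ) : Trop) else ⊥) :
    ∀ i j, tmul P A i j = ((p i : ℝ) : Trop) + A (σ i) j := by
  intro i j
  show Finset.univ.sup (fun k => P i k + A k j) = _
  rw [trop_sup_single (fun k => P i k + A k j) (σ i)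
    (fun k hk => by show P i k + A k j = ⊥; rw [hP i k, if_neg hk]; simp)]
  rw [hP i (σ i), if_pos rfl]

lemma tmul_entry_right {r c : ℕ} (A : Fin r → Fin c → Trop) (Q : Fin c → Fin c → Trop)
    (σ : Equiv.Perm (Fin c)) (t : Fin c → ℝ)
    (hQ : ∀ k j, Q k j = if j = σ k then ((t k : ℝ) : Trop) else ⊥) :
    ∀ i j, tmul A Q i j = A i (σ.symm j) + ((t (σ.symm j) : ℝ) : Trop) := by
  intro i j
  show Finset.univ.sup (fun k => A i k + Q k j) = _
  rw [trop_sup_single (fun k => A i k + Q k j) (σ.symm j)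
    (fun k hk => by
      show A i k + Q k j = ⊥
      rw [hQ k j, if_neg (fun hj => hk (by rw [hj, Equiv.symm_apply_apply]))]
      simp)]
  rw [hQ (σ.symm j) j, if_pos (by rw [Equiv.apply_symm_apply])]

lemma colSpace_eq {n m : ℕ} (B : Fin n → Fin m → Trop) :
    colSpace B = genBy (Set.range fun j => fun i => B i j) := by
  have h : {v | ∃ j, v = fun i => B i j} = Set.range (fun j => fun i => B i j) := by
    ext v
    exact ⟨fun ⟨j, hj⟩ => ⟨j, hj.symm⟩, fun ⟨j, hj⟩ => ⟨j, hj.symm⟩⟩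
  unfold colSpace
  rw [h]

lemma rowSpace_eq {n m : ℕ} (B : Fin n → Fin m → Trop) :
    rowSpace B = genBy (Set.range fun i => fun j => B i j) := by
  have h : {v | ∃ i, v = fun j => B i j} = Set.range (fun i => fun j => B i j) := by
    ext v
    exact ⟨fun ⟨i, hi⟩ => ⟨i, hi.symm⟩, fun ⟨i, hi⟩ => ⟨i, hi.symm⟩⟩
  unfold rowSpace
  rw [h]

lemma col_has_fin {r c : ℕ} {A : Fin r → Fin c → Trop} (hconn : BConnected A)
    (hr : 0 < r) (j : Fin c) : ∃ i, A i j ≠ ⊥ := by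
  have h := hconn (Sum.inr j) (Sum.inl ⟨0, hr⟩)
  rcases Relation.ReflTransGen.cases_head h with heq | ⟨z, hadj, _⟩
  · exact absurd heq (by simp)
  · cases z with
    | inl i => exact ⟨i, hadj⟩
    | inr j' => exact hadj.elim

lemma row_has_fin {r c : ℕ} {A : Fin r → Fin c → Trop} (hconn : BConnected A)
    (hc : 0 < c) (i : Fin r) : ∃ j, A i j ≠ ⊥ := by
  have h := hconn (Sum.inl i) (Sum.inr ⟨0, hc⟩)
  rcases Relation.ReflTransGen.cases_head h with heq | ⟨z, hadj, _⟩
  · exact absurd heq (by simp)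
  · cases z with
    | inl i' => exact hadj.elim
    | inr j => exact ⟨j, hadj⟩

def IsWit {r c : ℕ} (A : Fin r → Fin c → Trop)
    (g : Equiv.Perm (Fin r) × Equiv.Perm (Fin c)) (a : Fin r → ℝ) (b : Fin c → ℝ) : Prop :=
  ∀ i j, A (g.1 i) (g.2 j) = ((b j - a i : ℝ) : Trop) + A i j

def AutS {r c : ℕ} (A : Fin r → Fin c → Trop) :
    Set (Equiv.Perm (Fin r) × Equiv.Perm (Fin c)) :=
  {g | ∃ a b, IsWit A g a b}

lemma one_mem_autS {r c : ℕ} (A : Fin r → Fin c → Trop) : (1 : _) ∈ AutS A :=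
  ⟨0, 0, fun i j => by simp [IsWit]⟩

lemma mul_wit {r c : ℕ} {A : Fin r → Fin c → Trop} {g g'} {a a' : Fin r → ℝ}
    {b b' : Fin c → ℝ} (hg : IsWit A g a b) (hg' : IsWit A g' a' b') :
    IsWit A (g' * g) (fun i => a i + a' (g.1 i)) (fun j => b j + b' (g.2 j)) := by
  intro i j
  have h1 : (g' * g).1 i = g'.1 (g.1 i) := rfl
  have h2 : (g' * g).2 j = g'.2 (g.2 j) := rfl
  rw [h1, h2, hg' (g.1 i) (g.2 j), hg i j, ← add_assoc, ← WithBot.coe_add]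
  have : b' (g.2 j) - a' (g.1 i) + (b j - a i)
      = b j + b' (g.2 j) - (a i + a' (g.1 i)) := by ring
  rw [this]

lemma mul_mem_autS {r c : ℕ} {A : Fin r → Fin c → Trop} {g g'}
    (hg : g ∈ AutS A) (hg' : g' ∈ AutS A) : g' * g ∈ AutS A := by
  obtain ⟨a, b, hw⟩ := hg
  obtain ⟨a', b', hw'⟩ := hg'
  exact ⟨_, _, mul_wit hw hw'⟩

lemma inv_mem_autS {r c : ℕ} {A : Fin r → Fin c → Trop} {g}
    (hg : g ∈ AutS A) : g⁻¹ ∈ AutS A := by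
  obtain ⟨a, b, hw⟩ := hg
  refine ⟨fun i => -(a (g.1⁻¹ i)), fun j => -(b (g.2⁻¹ j)), fun i j => ?_⟩
  have h := hw (g.1⁻¹ i) (g.2⁻¹ j)
  simp only [← Equiv.Perm.mul_apply, mul_inv_cancel, Equiv.Perm.one_apply] at h
  have h2 := trop_cancel _ _ _ h
  have h3 : (g⁻¹).1 = g.1⁻¹ := rfl
  have h4 : (g⁻¹).2 = g.2⁻¹ := rfl
  rw [h3, h4, h2]
  have : -(b (g.2⁻¹ j) - a (g.1⁻¹ i)) = -b (g.2⁻¹ j) - -a (g.1⁻¹ i) := by ring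
  rw [this]

noncomputable def witA {r c : ℕ} (A : Fin r → Fin c → Trop)
    (g : Equiv.Perm (Fin r) × Equiv.Perm (Fin c)) : Fin r → ℝ :=
  if h : g ∈ AutS A then h.choose else 0

noncomputable def witB {r c : ℕ} (A : Fin r → Fin c → Trop)
    (g : Equiv.Perm (Fin r) × Equiv.Perm (Fin c)) : Fin c → ℝ :=
  if h : g ∈ AutS A then h.choose_spec.choose else 0

lemma wit_spec {r c : ℕ} {A : Fin r → Fin c → Trop} {g} (h : g ∈ AutS A) :
    IsWit A g (witA A g) (witB A g) := by
  unfold witA witB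
  rw [dif_pos h, dif_pos h]
  exact h.choose_spec.choose_spec

noncomputable def DD {r c : ℕ} (A : Fin r → Fin c → Trop)
    (g : Equiv.Perm (Fin r) × Equiv.Perm (Fin c)) : (Fin r ⊕ Fin c) → ℝ :=
  Sum.elim (witA A g) (witB A g)

lemma wit_unique {r c : ℕ} {A : Fin r → Fin c → Trop} (hconn : BConnected A)
    {g} {a a' : Fin r → ℝ} {b b' : Fin c → ℝ}
    (h1 : IsWit A g a b) (h2 : IsWit A g a' b') :
    ∀ x y, Sum.elim a b x - Sum.elim a' b' x = Sum.elim a b y - Sum.elim a' b' y := by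
  have edge : ∀ i j, A i j ≠ ⊥ → a i - a' i = b j - b' j := by
    intro i j hij
    obtain ⟨x, hx⟩ := trop_ne_bot hij
    have e1 := h1 i j
    have e2 := h2 i j
    rw [hx] at e1 e2
    have e3 := e1.symm.trans e2
    rw [← WithBot.coe_add, ← WithBot.coe_add, WithBot.coe_inj] at e3
    linarith
  have step : ∀ x y, BAdj A x y →
      Sum.elim a b x - Sum.elim a' b' x = Sum.elim a b y - Sum.elim a' b' y := by
    rintro (i | j) (i' | j') hxy
    · exact hxy.elim
    · simpa using edge i j' hxy
    · simpa using (edge i' j hxy).symm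
    · exact hxy.elim
  intro x y
  have h := hconn x y
  induction h with
  | refl => rfl
  | tail _ h2' ih => exact ih.trans (step _ _ h2')

lemma cocycle {r c : ℕ} {A : Fin r → Fin c → Trop} (hconn : BConnected A) {g g'}
    (hg : g ∈ AutS A) (hg' : g' ∈ AutS A) (x y : Fin r ⊕ Fin c) :
    DD A (g' * g) x - (DD A g x + DD A g' (Sum.map g.1 g.2 x))
      = DD A (g' * g) y - (DD A g y + DD A g' (Sum.map g.1 g.2 y)) := by
  have hW := mul_wit (wit_spec hg) (wit_spec hg')
  have hW' := wit_spec (mul_mem_autS hg hg')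
  have hu := wit_unique hconn hW' hW
  have key : ∀ z, Sum.elim (fun i => witA A g i + witA A g' (g.1 i))
      (fun j => witB A g j + witB A g' (g.2 j)) z
      = DD A g z + DD A g' (Sum.map g.1 g.2 z) := by
    rintro (i | j) <;> rfl
  have h := hu x y
  rw [key x, key y] at h
  exact h

noncomputable def AutF {r c : ℕ} (A : Fin r → Fin c → Trop) :
    Finset (Equiv.Perm (Fin r) × Equiv.Perm (Fin c)) :=
  Finset.univ.filter (· ∈ AutS A)

noncomputable def uR {r c : ℕ} (A : Fin r → Fin c → Trop) (x : Fin r ⊕ Fin c) : ℝ :=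
  ∑ h ∈ AutF A, DD A h x

lemma mem_autF {r c : ℕ} {A : Fin r → Fin c → Trop} {g} :
    g ∈ AutF A ↔ g ∈ AutS A := by simp [AutF]

lemma central {r c : ℕ} {A : Fin r → Fin c → Trop} (hconn : BConnected A) {g}
    (hg : g ∈ AutS A) (x y : Fin r ⊕ Fin c) :
    (uR A x - uR A (Sum.map g.1 g.2 x)) - (uR A y - uR A (Sum.map g.1 g.2 y))
      = ((AutF A).card : ℝ) * (DD A g x - DD A g y) := by
  have reindex : ∀ x', ∑ h ∈ AutF A, DD A (h * g) x' = uR A x' := by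
    intro x'
    refine Finset.sum_equiv (Equiv.mulRight g) (fun h => ?_) (fun h _ => rfl)
    simp only [mem_autF, Equiv.coe_mulRight]
    constructor
    · intro hh; exact mul_mem_autS hg hh
    · intro hh
      have := mul_mem_autS (inv_mem_autS hg) hh
      rwa [mul_inv_cancel_right] at this
  have hsum : ∑ h ∈ AutF A, (DD A (h * g) x - (DD A g x + DD A h (Sum.map g.1 g.2 x)))
      = ∑ h ∈ AutF A, (DD A (h * g) y - (DD A g y + DD A h (Sum.map g.1 g.2 y))) :=
    Finset.sum_congr rfl fun h hh => cocycle hconn hg (mem_autF.mp hh) x y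
  have expand : ∀ x', ∑ h ∈ AutF A, (DD A (h * g) x' - (DD A g x' + DD A h (Sum.map g.1 g.2 x')))
      = uR A x' - (((AutF A).card : ℝ) * DD A g x' + uR A (Sum.map g.1 g.2 x')) := by
    intro x'
    rw [Finset.sum_sub_distrib, Finset.sum_add_distrib, reindex, Finset.sum_const,
      nsmul_eq_mul]
    rfl
  rw [expand x, expand y] at hsum
  linarith

lemma autF_card_pos {r c : ℕ} (A : Fin r → Fin c → Trop) : 0 < (AutF A).card :=
  Finset.card_pos.mpr ⟨1, mem_autF.mpr (one_mem_autS A)⟩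

lemma main_u {r c : ℕ} (A : Fin r → Fin c → Trop) (hr : 0 < r) (hc : 0 < c)
    (hcrank : colRank A = c) (hconn : BConnected A) :
    ∃ u : Fin r → ℝ, ∀ P ∈ GA A, ∃ lam : ℝ,
      tvmul P (fun i => ((u i : ℝ) : Trop)) = fun i => (((lam + u i : ℝ)) : Trop) := by
  set x₀ : Fin r ⊕ Fin c := Sum.inl ⟨0, hr⟩ with hx₀
  set N : ℝ := ((AutF A).card : ℝ) with hN
  have hNpos : 0 < N := by rw [hN]; exact_mod_cast autF_card_pos A
  have hNne : N ≠ 0 := ne_of_gt hNpos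
  set u : Fin r → ℝ := fun i => N⁻¹ * uR A (Sum.inl i) with hu
  refine ⟨u, ?_⟩
  intro P hP
  obtain ⟨σ, p, hPs⟩ := monomial_struct P hP.1
  have hPA := tmul_entry P A σ p hPs
  have hzw : genBy (Set.range fun j => fun i => ((p i : ℝ) : Trop) + A (σ i) j)
      = genBy (Set.range fun j => fun i => A i j) := by
    have h1 : (fun j => fun i => tmul P A i j)
        = fun j => fun i => ((p i : ℝ) : Trop) + A (σ i) j :=
      funext fun j => funext fun i => hPA i j
    rw [← h1, ← colSpace_eq, ← colSpace_eq]
    exact hP.2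
  have hrank' : sInf {k | ∃ G : Finset (Fin r → Trop),
      G.card = k ∧ genBy ↑G = genBy (Set.range fun j => fun i => A i j)} = c := by
    rw [← colSpace_eq]
    exact hcrank
  obtain ⟨τ, q, hzq⟩ := key_unique hc (fun j => fun i => A i j)
    (fun j => fun i => ((p i : ℝ) : Trop) + A (σ i) j)
    (fun j => col_has_fin hconn hr j) hzw hrank'
  set g : Equiv.Perm (Fin r) × Equiv.Perm (Fin c) := (σ, τ⁻¹) with hg
  have hwit : IsWit A g p (fun j => q (τ⁻¹ j)) := by
    intro i j
    have h := hzq (τ⁻¹ j) i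
    simp only [← Equiv.Perm.mul_apply, mul_inv_cancel, Equiv.Perm.one_apply] at h
    have h2 := trop_cancel (p i) _ _ h.symm
    show A (σ i) (τ⁻¹ j) = _
    rw [h2, ← add_assoc, ← WithBot.coe_add,
      show -(p i) + q (τ⁻¹ j) = q (τ⁻¹ j) - p i from by ring]
  have hgmem : g ∈ AutS A := ⟨_, _, hwit⟩
  have huniq := wit_unique hconn (wit_spec hgmem) hwit
  set Cst : ℝ := Sum.elim (witA A g) (witB A g) x₀
    - Sum.elim p (fun j => q (τ⁻¹ j)) x₀ with hCst
  have hpi : ∀ i, witA A g i - p i = Cst := by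
    intro i
    have h := huniq (Sum.inl i) x₀
    simpa [hCst] using h
  refine ⟨DD A g x₀ - Cst - N⁻¹ * (uR A x₀ - uR A (Sum.map g.1 g.2 x₀)), ?_⟩
  funext i
  have h1 := hpi i
  have h2 := central hconn hgmem (Sum.inl i) x₀
  have hgm : Sum.map g.1 g.2 (Sum.inl i) = Sum.inl (σ i) := rfl
  rw [hgm] at h2
  have hDD : DD A g (Sum.inl i) = witA A g i := rfl
  rw [hDD] at h2
  show Finset.univ.sup (fun k => P i k + ((u k : ℝ) : Trop)) = _
  rw [trop_sup_single (fun k => P i k + ((u k : ℝ) : Trop)) (σ i)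
    (fun k hk => by show P i k + _ = ⊥; rw [hPs i k, if_neg hk]; simp)]
  show P i (σ i) + _ = _
  rw [hPs i (σ i), if_pos rfl, ← WithBot.coe_add, WithBot.coe_inj]
  -- real arithmetic
  have hval : witA A g i = p i + Cst := by linarith
  rw [hval] at h2
  rw [← hN] at h2
  simp only [hu]
  set Ui := uR A (Sum.inl i) with hUi
  set Us := uR A (Sum.inl (σ i)) with hUs
  set U0 := uR A x₀ with hU0
  set Ug := uR A (Sum.map g.1 g.2 x₀) with hUg
  set D0 := DD A g x₀ with hD0
  have h3 := congrArg (fun t : ℝ => N⁻¹ * t) h2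
  simp only [inv_mul_cancel_left₀ hNne] at h3
  linarith [h3]

lemma main_v {r c : ℕ} (A : Fin r → Fin c → Trop) (hr : 0 < r) (hc : 0 < c)
    (hrrank : rowRank A = r) (hconn : BConnected A) :
    ∃ v : Fin c → ℝ, ∀ Q ∈ AGr A, ∃ mu : ℝ,
      vtmul (fun j => ((v j : ℝ) : Trop)) Q = fun j => (((mu + v j : ℝ)) : Trop) := by
  set x₀ : Fin r ⊕ Fin c := Sum.inl ⟨0, hr⟩ with hx₀
  set N : ℝ := ((AutF A).card : ℝ) with hN
  have hNpos : 0 < N := by rw [hN]; exact_mod_cast autF_card_pos A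
  have hNne : N ≠ 0 := ne_of_gt hNpos
  set v : Fin c → ℝ := fun j => -(N⁻¹ * uR A (Sum.inr j)) with hv
  refine ⟨v, ?_⟩
  intro Q hQ
  obtain ⟨σQ, t, hQs⟩ := monomial_struct Q hQ.1
  have hAQ := tmul_entry_right A Q σQ t hQs
  have hzw : genBy (Set.range fun i => fun j => A i (σQ.symm j) + ((t (σQ.symm j) : ℝ) : Trop))
      = genBy (Set.range fun i => fun j => A i j) := by
    have h1 : (fun i => fun j => tmul A Q i j)
        = fun i => fun j => A i (σQ.symm j) + ((t (σQ.symm j) : ℝ) : Trop) :=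
      funext fun i => funext fun j => hAQ i j
    rw [← h1, ← rowSpace_eq, ← rowSpace_eq]
    exact hQ.2
  have hrank' : sInf {k | ∃ G : Finset (Fin c → Trop),
      G.card = k ∧ genBy ↑G = genBy (Set.range fun i => fun j => A i j)} = r := by
    rw [← rowSpace_eq]
    exact hrrank
  obtain ⟨π, s, hzs⟩ := key_unique hr (fun i => fun j => A i j)
    (fun i => fun j => A i (σQ.symm j) + ((t (σQ.symm j) : ℝ) : Trop))
    (fun i => row_has_fin hconn hc i) hzw hrank'
  set g : Equiv.Perm (Fin r) × Equiv.Perm (Fin c) := (π⁻¹, σQ.symm) with hg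
  have hwit : IsWit A g (fun i => -(s (π⁻¹ i))) (fun j => -(t (σQ.symm j))) := by
    intro i j
    have h := hzs (π⁻¹ i) j
    simp only [← Equiv.Perm.mul_apply, mul_inv_cancel, Equiv.Perm.one_apply] at h
    rw [add_comm] at h
    have h2 := trop_cancel (t (σQ.symm j)) _ _ h.symm
    show A (π⁻¹ i) (σQ.symm j) = _
    rw [h2, ← add_assoc, ← WithBot.coe_add,
      show -(t (σQ.symm j)) + s (π⁻¹ i) = -(t (σQ.symm j)) - -(s (π⁻¹ i)) from by ring]
  have hgmem : g ∈ AutS A := ⟨_, _, hwit⟩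
  have huniq := wit_unique hconn (wit_spec hgmem) hwit
  set Cst : ℝ := Sum.elim (witA A g) (witB A g) x₀
    - Sum.elim (fun i => -(s (π⁻¹ i))) (fun j => -(t (σQ.symm j))) x₀ with hCst
  have hpj : ∀ j, witB A g j - (-(t (σQ.symm j))) = Cst := by
    intro j
    have h := huniq (Sum.inr j) x₀
    simpa [hCst] using h
  refine ⟨Cst - DD A g x₀ + N⁻¹ * (uR A x₀ - uR A (Sum.map g.1 g.2 x₀)), ?_⟩
  funext j
  have h1 := hpj j
  have h2 := central hconn hgmem (Sum.inr j) x₀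
  have hgm : Sum.map g.1 g.2 (Sum.inr j) = Sum.inr (σQ.symm j) := rfl
  rw [hgm] at h2
  have hDD : DD A g (Sum.inr j) = witB A g j := rfl
  rw [hDD] at h2
  show Finset.univ.sup (fun k => ((v k : ℝ) : Trop) + Q k j) = _
  rw [trop_sup_single (fun k => ((v k : ℝ) : Trop) + Q k j) (σQ.symm j)
    (fun k hk => by
      show _ + Q k j = ⊥
      rw [hQs k j, if_neg (fun hj => hk (by rw [hj, Equiv.symm_apply_apply]))]
      simp)]
  show _ + Q (σQ.symm j) j = _
  rw [hQs (σQ.symm j) j, if_pos (by rw [Equiv.apply_symm_apply]),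
    ← WithBot.coe_add, WithBot.coe_inj]
  -- real arithmetic
  have hval : witB A g j = Cst - t (σQ.symm j) := by linarith
  rw [hval] at h2
  rw [← hN] at h2
  simp only [hv]
  set Uj := uR A (Sum.inr j) with hUj
  set Uk := uR A (Sum.inr (σQ.symm j)) with hUk
  set U0 := uR A x₀ with hU0
  set Ug := uR A (Sum.map g.1 g.2 x₀) with hUg
  set D0 := DD A g x₀ with hD0
  have h3 := congrArg (fun x : ℝ => N⁻¹ * x) h2
  simp only [inv_mul_cancel_left₀ hNne] at h3
  linarith [h3]

lemma no_step_r0 {c : ℕ} (A : Fin 0 → Fin c → Trop) :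
    ∀ x y, Relation.ReflTransGen (BAdj A) x y → x = y := by
  have hno : ∀ a b : Fin 0 ⊕ Fin c, ¬ BAdj A a b := by
    rintro (i | j) (i' | j') h
    · exact h
    · exact i.elim0
    · exact i'.elim0
    · exact h
  intro x y h
  induction h with
  | refl => rfl
  | tail _ hbc _ => exact absurd hbc (hno _ _)

lemma no_step_c0 {r : ℕ} (A : Fin r → Fin 0 → Trop) :
    ∀ x y, Relation.ReflTransGen (BAdj A) x y → x = y := by
  have hno : ∀ a b : Fin r ⊕ Fin 0, ¬ BAdj A a b := by
    rintro (i | j) (i' | j') h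
    · exact h
    · exact j'.elim0
    · exact j.elim0
    · exact j.elim0
  intro x y h
  induction h with
  | refl => rfl
  | tail _ hbc _ => exact absurd hbc (hno _ _)

/-- For `A` of full rank with connected `B_A`, there is a finite vector
`u ∈ ℝ^r` which is a right eigenvector of every `P ∈ G_A`, and a finite vector `v ∈ ℝ^c`
which is a left eigenvector of every `Q ∈ {}_AG`. -/
theorem stmt_11 {r c : ℕ} (A : Fin r → Fin c → Trop)
    (hr : rowRank A = r) (hc : colRank A = c) (hconn : BConnected A) :
    (∃ u : Fin r → ℝ, ∀ P ∈ GA A, ∃ lam : ℝ,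
      tvmul P (fun i => ((u i : ℝ) : Trop)) = fun i => (((lam + u i : ℝ)) : Trop)) ∧
    (∃ v : Fin c → ℝ, ∀ Q ∈ AGr A, ∃ mu : ℝ,
      vtmul (fun j => ((v j : ℝ) : Trop)) Q = fun j => (((mu + v j : ℝ)) : Trop)) := by
  rcases Nat.eq_zero_or_pos r with hr0 | hrpos
  · subst hr0
    constructor
    · exact ⟨fun _ => 0, fun P _ => ⟨0, funext fun i => i.elim0⟩⟩
    · have hc1 : c ≤ 1 := by
        by_contra hgt
        push_neg at hgt
        have h01 := no_step_r0 A (Sum.inr ⟨0, by omega⟩) (Sum.inr ⟨1, by omega⟩)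
          (hconn _ _)
        simp at h01
      interval_cases c
      · exact ⟨fun _ => 0, fun Q _ => ⟨0, funext fun j => j.elim0⟩⟩
      · refine ⟨fun _ => 0, fun Q hQ => ?_⟩
        obtain ⟨j0, hj0, _⟩ := hQ.1.1 0
        have hj00 : j0 = 0 := Subsingleton.elim _ _
        rw [hj00] at hj0
        obtain ⟨μ, hμ⟩ := trop_ne_bot hj0
        refine ⟨μ, funext fun j => ?_⟩
        have hj : j = 0 := Subsingleton.elim _ _
        subst hj
        show Finset.univ.sup (fun k => ((0:ℝ) : Trop) + Q k 0) = (((μ + 0 : ℝ)) : Trop)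
        rw [trop_sup_single (fun k => ((0:ℝ) : Trop) + Q k 0) 0
          (fun k hk => absurd (Subsingleton.elim k 0) hk)]
        rw [hμ, ← WithBot.coe_add]
        norm_num
  · rcases Nat.eq_zero_or_pos c with hc0 | hcpos
    · subst hc0
      constructor
      · have hr1 : r ≤ 1 := by
          by_contra hgt
          push_neg at hgt
          have h01 := no_step_c0 A (Sum.inl ⟨0, by omega⟩) (Sum.inl ⟨1, by omega⟩)
            (hconn _ _)
          simp at h01
        have hr1' : r = 1 := by omega
        subst hr1'
        refine ⟨fun _ => 0, fun P hP => ?_⟩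
        obtain ⟨k0, hk0, _⟩ := hP.1.1 0
        have hk00 : k0 = 0 := Subsingleton.elim _ _
        rw [hk00] at hk0
        obtain ⟨lam, hlam⟩ := trop_ne_bot hk0
        refine ⟨lam, funext fun i => ?_⟩
        have hi : i = 0 := Subsingleton.elim _ _
        subst hi
        show Finset.univ.sup (fun k => P 0 k + ((0:ℝ) : Trop)) = (((lam + 0 : ℝ)) : Trop)
        rw [trop_sup_single (fun k => P 0 k + ((0:ℝ) : Trop)) 0
          (fun k hk => absurd (Subsingleton.elim k 0) hk)]
        rw [hlam, ← WithBot.coe_add]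
      · exact ⟨fun _ => 0, fun Q _ => ⟨0, funext fun j => j.elim0⟩⟩
    · exact ⟨main_u A hrpos hcpos hc hconn, main_v A hrpos hcpos hr hconn⟩
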